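/- Fix $T > 0$ and $\gamma \in [0,1]$. The function $\eta^{1,2}(t) = (2 - \gamma - 2\sqrt{1-\gamma})\left(\frac{t}{T}\right)^2 + 2(-1 + \sqrt{1-\gamma})\frac{t}{T} + 1$ satisfies the ODE $2 \eta'' \eta = (\eta')^2$ on $(0,T)$, together with the boundary conditions $\eta(0) = 1$ and $\eta(T) = 1 - \gamma$. -/

import Mathlib

/-- The function `η^{1,2}(t) = (2-γ-2√(1-γ))(t/T)² + 2(-1+√(1-γ))(t/T) + 1` satisfies
the ODE `2 η'' η = (η')²` on `(0,T)` with boundary conditions `η(0) = 1`,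
`η(T) = 1 - γ`. -/
theorem stmt_5 (T γ : ℝ) (hT : 0 < T) (hγ : γ ∈ Set.Icc (0 : ℝ) 1) :
    let η : ℝ → ℝ := fun t =>
      (2 - γ - 2 * Real.sqrt (1 - γ)) * (t / T) ^ 2 +
        2 * (-1 + Real.sqrt (1 - γ)) * (t / T) + 1
    (∀ t ∈ Set.Ioo (0 : ℝ) T, 2 * deriv (deriv η) t * η t = (deriv η t) ^ 2) ∧
      η 0 = 1 ∧ η T = 1 - γ := by
  intro η
  set s := Real.sqrt (1 - γ) with hs
  have hT0 : T ≠ 0 := ne_of_gt hT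
  have hs2 : s ^ 2 = 1 - γ := Real.sq_sqrt (by linarith [hγ.2])
  set A : ℝ := (2 - γ - 2 * s) / T ^ 2 with hA
  set B : ℝ := 2 * (-1 + s) / T with hB
  have hη : η = fun t => A * t ^ 2 + B * t + 1 := by
    funext t
    show (2 - γ - 2 * s) * (t / T) ^ 2 + 2 * (-1 + s) * (t / T) + 1 = _
    rw [hA, hB]
    field_simp
  have hd1 : ∀ t : ℝ, HasDerivAt η (2 * A * t + B) t := by
    intro t
    rw [hη]
    have h := (((hasDerivAt_pow 2 t).const_mul A).add ((hasDerivAt_id t).const_mul B)).add_const 1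
    simpa [mul_comm, mul_assoc, mul_left_comm] using h
  have hderiv : deriv η = fun t => 2 * A * t + B := funext fun t => (hd1 t).deriv
  have hd2 : ∀ t : ℝ, deriv (deriv η) t = 2 * A := by
    intro t
    rw [hderiv]
    have h := ((hasDerivAt_id t).const_mul (2 * A)).add_const B
    simpa using h.deriv
  have key : 4 * A = B ^ 2 := by
    rw [hA, hB]
    field_simp
    nlinarith [hs2]
  refine ⟨fun t ht => ?_, ?_, ?_⟩
  · rw [hd2, hderiv, hη]
    simp only
    nlinarith [key]
  · simp [hη]
  · rw [hη]
    simp only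
    have : A * T ^ 2 = 2 - γ - 2 * s := by rw [hA, div_mul_cancel₀ _ (pow_ne_zero 2 hT0)]
    have hBT : B * T = 2 * (-1 + s) := by rw [hB, div_mul_cancel₀ _ hT0]
    rw [this, hBT]; ring
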